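/- Let d ≥ 1, let A ⊂ ℤ^d be a finite set whose convex hull H(A) is a d-simplex with |A| = d+1 or |A| = d+2, and fix a_0 ∈ A. Then for every integer N ≥ 1 the structure equation (∗) holds: NA = (N·H(A) ∩ (N·a_0 + Λ_{A−A})) ∖ ⋃_{a ∈ ex(H(A))} (N·a − E(a−A)). -/

import Mathlib

open Pointwise MeasureTheory

noncomputable section

/-- Embedding of integer vectors into real vectors. -/
def emb (d : ℕ) : (Fin d → ℤ) → (Fin d → ℝ) := fun x i => (x i : ℝ)

/-- The `N`-fold sumset `NA` (with `0·A = {0}`). -/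
def nfold (d : ℕ) (A : Set (Fin d → ℤ)) (N : ℕ) : Set (Fin d → ℤ) :=
  {x | ∃ f : Fin N → (Fin d → ℤ), (∀ i, f i ∈ A) ∧ x = ∑ i, f i}

/-- `P(A) = ⋃_{N ≥ 1} NA`. -/
def PA (d : ℕ) (A : Set (Fin d → ℤ)) : Set (Fin d → ℤ) :=
  ⋃ N ∈ Set.Ici 1, nfold d A N

/-- The width `w(A) = max_{a₁,a₂ ∈ A} ‖a₁ - a₂‖_∞`. -/
def width (d : ℕ) (A : Finset (Fin d → ℤ)) : ℕ :=
  (A ×ˢ A).sup fun p => Finset.univ.sup fun i => (p.1 i - p.2 i).natAbs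

/-- The convex hull `H(A)` in `ℝ^d`. -/
def hull (d : ℕ) (A : Finset (Fin d → ℤ)) : Set (Fin d → ℝ) :=
  convexHull ℝ (emb d '' ↑A)

/-- The cone `C_B = {∑_{b ∈ B} c_b b : c_b ≥ 0}` generated by `B`. -/
def cone (d : ℕ) (B : Finset (Fin d → ℤ)) : Set (Fin d → ℝ) :=
  {x | ∃ c : (Fin d → ℤ) → ℝ, (∀ a, 0 ≤ c a) ∧ x = ∑ a ∈ B, c a • emb d a}

/-- The lattice (subgroup of `ℤ^d`) generated by a set `S`. -/
def latt (d : ℕ) (S : Set (Fin d → ℤ)) : AddSubgroup (Fin d → ℤ) :=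
  AddSubgroup.closure S

/-- The exceptional set `E(A) = (C_A ∩ Λ_A) ∖ P(A)`, viewed inside `ℤ^d`. -/
def excep (d : ℕ) (A : Finset (Fin d → ℤ)) : Set (Fin d → ℤ) :=
  {x | emb d x ∈ cone d A ∧ x ∈ latt d ↑A ∧ x ∉ PA d ↑A}

/-- The set of (lattice) extreme points of `H(A)`: those `p` with `emb p ∈ H(A)` such that
some `v ∈ span ℝ (A - A)`, `v ≠ 0`, satisfies `⟨v,x⟩ > ⟨v,p⟩` for all `x ∈ H(A) ∖ {p}`. -/
def exP (d : ℕ) (A : Finset (Fin d → ℤ)) : Set (Fin d → ℤ) :=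
  {p | emb d p ∈ hull d A ∧
    ∃ v ∈ Submodule.span ℝ (emb d '' ((A : Set (Fin d → ℤ)) - (A : Set (Fin d → ℤ)))),
      v ≠ (0 : Fin d → ℝ) ∧
      ∀ x ∈ hull d A, x ≠ emb d p → (∑ i, v i * emb d p i) < ∑ i, v i * x i}

/-- The structure equation
`NA = (N·H(A) ∩ (N·a₀ + Λ_{A-A})) ∖ ⋃_{a ∈ ex(H(A))} (N·a - E(a - A))`. -/
def structEq (d : ℕ) (A : Finset (Fin d → ℤ)) (a0 : Fin d → ℤ) (N : ℕ) : Prop :=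
  emb d '' nfold d ↑A N =
    ((N : ℝ) • hull d A ∩
      emb d '' (({N • a0} : Set (Fin d → ℤ)) +
        (latt d ((A : Set (Fin d → ℤ)) - (A : Set (Fin d → ℤ))) : Set (Fin d → ℤ)))) \
    ⋃ a ∈ exP d A,
      emb d '' (({N • a} : Set (Fin d → ℤ)) - excep d (A.image fun y => a - y))

/-- `H(A)` is a `d`-simplex: there is `B ⊆ A` with `|B| = d+1`, `B - B` spanning `ℝ^d`,
and `H(A) = H(B)`. -/
def IsSimplex (d : ℕ) (A : Finset (Fin d → ℤ)) : Prop :=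
  ∃ B ⊆ A, B.card = d + 1 ∧
    Submodule.span ℝ (emb d '' ((B : Set (Fin d → ℤ)) - (B : Set (Fin d → ℤ)))) = ⊤ ∧
    hull d B = hull d A

/-- `N_A(v)`: the minimal positive `N` with `v ∈ NA`, and `N_A(0) = 0`. -/
def NAfn (d : ℕ) (A : Set (Fin d → ℤ)) (v : Fin d → ℤ) : ℕ :=
  if v = 0 then 0 else sInf {N : ℕ | 0 < N ∧ v ∈ nfold d A N}

/-- The set `S(A,B)` of `B`-minimal elements. -/
def Smin (d : ℕ) (A B : Set (Fin d → ℤ)) : Set (Fin d → ℤ) :=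
  {0} ∪ {u | u ∈ PA d A ∧ u ≠ 0 ∧
    ∀ f : Fin (NAfn d A u) → (Fin d → ℤ), (∀ i, f i ∈ A) → u = ∑ i, f i →
      ∀ i, f i ∉ B ∪ ({0} : Set (Fin d → ℤ))}



namespace Aux

theorem emb_inj (d : ℕ) : Function.Injective (emb d) := by
  intro x y h
  funext i
  have := congrFun h i
  simpa [emb] using this

def embH (d : ℕ) : (Fin d → ℤ) →+ (Fin d → ℝ) where
  toFun := emb d
  map_zero' := by funext i; simp [emb]
  map_add' := by intro x y; funext i; simp [emb]

theorem emb_sum {d n : ℕ} (f : Fin n → (Fin d → ℤ)) :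
    emb d (∑ i, f i) = ∑ i, emb d (f i) := map_sum (embH d) f Finset.univ

theorem emb_sum' {d : ℕ} (s : Finset (Fin d → ℤ)) (f : (Fin d → ℤ) → (Fin d → ℤ)) :
    emb d (∑ y ∈ s, f y) = ∑ y ∈ s, emb d (f y) := map_sum (embH d) f s

theorem emb_sub {d : ℕ} (x y : Fin d → ℤ) : emb d (x - y) = emb d x - emb d y :=
  map_sub (embH d).toIntLinearMap.toAddMonoidHom x y

theorem emb_zsmul {d : ℕ} (n : ℤ) (x : Fin d → ℤ) : emb d (n • x) = (n : ℝ) • emb d x := by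
  funext i; simp [emb]

theorem emb_nsmul {d : ℕ} (n : ℕ) (x : Fin d → ℤ) : emb d (n • x) = (n : ℝ) • emb d x := by
  funext i; simp [emb]

theorem nfold_zero (d : ℕ) (A : Set (Fin d → ℤ)) : nfold d A 0 = {0} := by
  ext x
  simp only [nfold, Set.mem_setOf_eq, Set.mem_singleton_iff]
  constructor
  · rintro ⟨f, -, rfl⟩; simp
  · rintro rfl; exact ⟨Fin.elim0, fun i => i.elim0, by simp⟩

theorem add_mem_nfold {d : ℕ} {A : Set (Fin d → ℤ)} {a x : Fin d → ℤ} {N : ℕ}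
    (ha : a ∈ A) (hx : x ∈ nfold d A N) : a + x ∈ nfold d A (N + 1) := by
  obtain ⟨f, hf, rfl⟩ := hx
  refine ⟨Fin.cons a f, ?_, ?_⟩
  · intro i
    refine Fin.cases ?_ ?_ i
    · simpa using ha
    · intro j; simpa using hf j
  · rw [Fin.sum_cons]

/-- membership in `nfold` from a multiplicity function -/
theorem combo_mem_nfold {d : ℕ} (A : Finset (Fin d → ℤ)) :
    ∀ (N : ℕ) (c : (Fin d → ℤ) → ℕ), (∑ y ∈ A, c y) = N →
      (∑ y ∈ A, (c y : ℤ) • y) ∈ nfold d ↑A N := by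
  intro N
  induction N with
  | zero =>
    intro c hc
    have h0 : ∀ y ∈ A, c y = 0 := by
      intro y hy
      exact (Finset.sum_eq_zero_iff.mp hc) y hy
    have : (∑ y ∈ A, (c y : ℤ) • y) = 0 := by
      apply Finset.sum_eq_zero
      intro y hy
      rw [h0 y hy]; simp
    rw [this, nfold_zero]; rfl
  | succ n ih =>
    intro c hc
    have hpos : ∃ y ∈ A, 0 < c y := by
      by_contra h
      push_neg at h
      have : (∑ y ∈ A, c y) = 0 := Finset.sum_eq_zero fun y hy => Nat.le_zero.mp (h y hy)
      omega
    obtain ⟨y₀, hy₀, hcy₀⟩ := hpos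
    set c' : (Fin d → ℤ) → ℕ := fun y => if y = y₀ then c y - 1 else c y with hc'
    have hsum' : (∑ y ∈ A, c' y) = n := by
      have h1 : (∑ y ∈ A, c y) = c y₀ + ∑ y ∈ A.erase y₀, c y :=
        (Finset.add_sum_erase A c hy₀).symm
      have h2 : (∑ y ∈ A, c' y) = c' y₀ + ∑ y ∈ A.erase y₀, c' y :=
        (Finset.add_sum_erase A c' hy₀).symm
      have h3 : ∑ y ∈ A.erase y₀, c' y = ∑ y ∈ A.erase y₀, c y := by
        apply Finset.sum_congr rfl
        intro y hy
        have : y ≠ y₀ := Finset.ne_of_mem_erase hy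
        simp [hc', this]
      rw [h2, h3]
      simp only [hc', if_pos rfl]
      omega
    have hrep : (∑ y ∈ A, (c y : ℤ) • y) = y₀ + ∑ y ∈ A, (c' y : ℤ) • y := by
      have h1 : (∑ y ∈ A, (c y : ℤ) • y) = (c y₀ : ℤ) • y₀ + ∑ y ∈ A.erase y₀, (c y : ℤ) • y :=
        (Finset.add_sum_erase A (fun y => (c y : ℤ) • y) hy₀).symm
      have h2 : (∑ y ∈ A, (c' y : ℤ) • y)
          = (c' y₀ : ℤ) • y₀ + ∑ y ∈ A.erase y₀, (c' y : ℤ) • y :=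
        (Finset.add_sum_erase A (fun y => (c' y : ℤ) • y) hy₀).symm
      have h3 : ∑ y ∈ A.erase y₀, (c' y : ℤ) • y = ∑ y ∈ A.erase y₀, (c y : ℤ) • y := by
        apply Finset.sum_congr rfl
        intro y hy
        have : y ≠ y₀ := Finset.ne_of_mem_erase hy
        simp [hc', this]
      rw [h1, h2, h3]
      have : (c y₀ : ℤ) • y₀ = y₀ + (c' y₀ : ℤ) • y₀ := by
        simp only [hc', if_pos rfl]
        have : (c y₀ : ℤ) = 1 + ((c y₀ - 1 : ℕ) : ℤ) := by omega
        rw [this, add_smul, one_smul]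
      rw [this, add_assoc]
    rw [hrep]
    exact add_mem_nfold hy₀ (ih c' hsum')

/-- multiplicity function from membership in `nfold` -/
theorem nfold_mem_combo {d : ℕ} (A : Finset (Fin d → ℤ)) {N : ℕ} {x : Fin d → ℤ}
    (hx : x ∈ nfold d ↑A N) :
    ∃ c : (Fin d → ℤ) → ℕ, (∑ y ∈ A, c y) = N ∧ x = ∑ y ∈ A, (c y : ℤ) • y := by
  obtain ⟨f, hf, rfl⟩ := hx
  classical
  refine ⟨fun y => (Finset.univ.filter fun i => f i = y).card, ?_, ?_⟩
  · have h := Finset.card_eq_sum_card_fiberwise (fun i (_ : i ∈ Finset.univ) => hf i)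
    simpa using h.symm
  · rw [← Finset.sum_fiberwise_of_maps_to (fun i (_ : i ∈ Finset.univ) => hf i)
      (fun i => f i)]
    apply Finset.sum_congr rfl
    intro y hy
    rw [Finset.sum_congr rfl (fun i hi => (Finset.mem_filter.mp hi).2)]
    simp [mul_comm]



/-- Elements of the lattice generated by `A - A`, shifted by `N • a₀`, have integer
mass-`N` representations. -/
theorem latt_combo {d : ℕ} (A : Finset (Fin d → ℤ)) {x : Fin d → ℤ}
    (hx : x ∈ latt d ((A : Set (Fin d → ℤ)) - (A : Set (Fin d → ℤ)))) :
    ∃ c : (Fin d → ℤ) → ℤ, (∑ y ∈ A, c y) = 0 ∧ x = ∑ y ∈ A, c y • y := by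
  classical
  induction hx using AddSubgroup.closure_induction with
  | mem s hs =>
    obtain ⟨y, hy, z, hz, rfl⟩ := hs
    refine ⟨(fun w => (if w = y then 1 else 0) - (if w = z then 1 else 0)), ?_, ?_⟩
    · rw [Finset.sum_sub_distrib]
      rw [Finset.sum_ite_eq' A y (fun _ => (1:ℤ)), Finset.sum_ite_eq' A z (fun _ => (1:ℤ))]
      simp [Finset.mem_coe.mp hy, Finset.mem_coe.mp hz]
    · simp only [sub_smul, ite_smul, one_smul, zero_smul, Finset.sum_sub_distrib]
      rw [Finset.sum_ite_eq' A y, Finset.sum_ite_eq' A z]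
      simp [Finset.mem_coe.mp hy, Finset.mem_coe.mp hz]
  | zero => exact ⟨0, by simp, by simp⟩
  | add a b _ _ iha ihb =>
    obtain ⟨c₁, h₁, rfl⟩ := iha
    obtain ⟨c₂, h₂, rfl⟩ := ihb
    exact ⟨c₁ + c₂, by simp [Finset.sum_add_distrib, h₁, h₂], by simp [add_smul, Finset.sum_add_distrib]⟩
  | neg a _ iha =>
    obtain ⟨c₁, h₁, rfl⟩ := iha
    exact ⟨-c₁, by simpa using h₁, by simp [neg_smul, Finset.sum_neg_distrib]⟩

theorem mem_hull_iff {d : ℕ} (B : Finset (Fin d → ℤ)) (x : Fin d → ℝ) :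
    x ∈ hull d B ↔ ∃ w : (Fin d → ℤ) → ℝ, (∀ y ∈ B, 0 ≤ w y) ∧ (∑ y ∈ B, w y) = 1 ∧
      x = ∑ y ∈ B, w y • emb d y := by
  classical
  constructor
  · intro hx
    rw [hull, ← Finset.coe_image, Finset.convexHull_eq] at hx
    obtain ⟨w', hw0, hw1, hwx⟩ := hx
    refine ⟨fun y => if y ∈ B then w' (emb d y) else 0, fun y hy => by
      simpa [hy] using hw0 (emb d y) (Finset.mem_image_of_mem _ hy), ?_, ?_⟩
    · rw [← hw1, Finset.sum_image (fun a _ b _ h => emb_inj d h)]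
      apply Finset.sum_congr rfl; intro y hy; simp [hy]
    · rw [← hwx, Finset.centerMass, hw1]
      rw [Finset.sum_image (fun a _ b _ h => emb_inj d h)]
      simp only [inv_one, one_smul, id]
      apply Finset.sum_congr rfl; intro y hy; simp [hy]
  · rintro ⟨w, hw0, hw1, rfl⟩
    have := Finset.centerMass_mem_convexHull (t := B) (w := w) (z := emb d)
      (s := emb d '' ↑B) hw0 (by rw [hw1]; norm_num) (fun y hy => ⟨y, hy, rfl⟩)
    rw [Finset.centerMass, hw1] at this
    simpa [hull] using this

/-- Scaled hull membership. -/
theorem mem_smul_hull_iff {d : ℕ} (B : Finset (Fin d → ℤ)) (N : ℕ) (hN : 1 ≤ N)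
    (x : Fin d → ℝ) :
    x ∈ (N : ℝ) • hull d B ↔ ∃ w : (Fin d → ℤ) → ℝ, (∀ y ∈ B, 0 ≤ w y) ∧
      (∑ y ∈ B, w y) = N ∧ x = ∑ y ∈ B, w y • emb d y := by
  have hN0 : (N : ℝ) ≠ 0 := by positivity
  rw [Set.mem_smul_set]
  constructor
  · rintro ⟨z, hz, rfl⟩
    rw [mem_hull_iff] at hz
    obtain ⟨w, hw0, hw1, rfl⟩ := hz
    refine ⟨fun y => N * w y, fun y hy => mul_nonneg (by positivity) (hw0 y hy), ?_, ?_⟩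
    · rw [← Finset.mul_sum, hw1, mul_one]
    · rw [Finset.smul_sum]
      apply Finset.sum_congr rfl; intro y _; rw [smul_smul]
  · rintro ⟨w, hw0, hw1, rfl⟩
    refine ⟨∑ y ∈ B, ((N:ℝ)⁻¹ * w y) • emb d y, ?_, ?_⟩
    · rw [mem_hull_iff]
      refine ⟨fun y => (N:ℝ)⁻¹ * w y, fun y hy => mul_nonneg (by positivity) (hw0 y hy),
        ?_, rfl⟩
      rw [← Finset.mul_sum, hw1, inv_mul_cancel₀ hN0]
    · rw [Finset.smul_sum]
      apply Finset.sum_congr rfl; intro y _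
      rw [smul_smul, ← mul_assoc, mul_inv_cancel₀ hN0, one_mul]



/-- Uniqueness of mass-preserving real representations over the vertex set. -/
theorem uniq_rep {d : ℕ} (B : Finset (Fin d → ℤ)) (hcardB : B.card = d + 1)
    (hspan : Submodule.span ℝ (emb d '' ((B : Set (Fin d → ℤ)) - (B : Set (Fin d → ℤ)))) = ⊤)
    (δ : (Fin d → ℤ) → ℝ) (h0 : ∑ y ∈ B, δ y • emb d y = 0) (hm : ∑ y ∈ B, δ y = 0) :
    ∀ y ∈ B, δ y = 0 := by
  classical
  have hBne : B.Nonempty := Finset.card_pos.mp (by omega)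
  obtain ⟨b₀, hb₀⟩ := hBne
  set B' := B.erase b₀ with hB'
  have hcard' : B'.card = d := by
    rw [hB', Finset.card_erase_of_mem hb₀, hcardB]
    omega
  set v : ↥B' → (Fin d → ℝ) := fun y => emb d ↑y - emb d b₀ with hv
  have hyspan : ∀ y ∈ B, emb d y - emb d b₀ ∈ Submodule.span ℝ (Set.range v) := by
    intro y hy
    by_cases hyb : y = b₀
    · simp [hyb]
    · exact Submodule.subset_span ⟨⟨y, Finset.mem_erase.mpr ⟨hyb, hy⟩⟩, rfl⟩
  have htop : ⊤ ≤ Submodule.span ℝ (Set.range v) := by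
    rw [← hspan]
    rw [Submodule.span_le]
    rintro - ⟨s, ⟨y, hy, z, hz, rfl⟩, rfl⟩
    have : emb d (y - z) = (emb d y - emb d b₀) - (emb d z - emb d b₀) := by
      rw [emb_sub]; abel
    rw [this]
    exact Submodule.sub_mem _ (hyspan y hy) (hyspan z hz)
  have hfin : Fintype.card ↥B' = Module.finrank ℝ (Fin d → ℝ) := by
    rw [Fintype.card_coe, hcard', Module.finrank_fintype_fun_eq_card, Fintype.card_fin]
  have hli : LinearIndependent ℝ v := by
    have h := (basisOfTopLeSpanOfCardEqFinrank v htop hfin).linearIndependent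
    rwa [coe_basisOfTopLeSpanOfCardEqFinrank] at h
  have hkey : ∑ i : ↥B', δ ↑i • v i = 0 := by
    have e1 : ∑ i : ↥B', δ ↑i • v i
        = ∑ y ∈ B', (δ y • emb d y - δ y • emb d b₀) := by
      rw [← Finset.sum_attach B' (fun y => δ y • emb d y - δ y • emb d b₀)]
      apply Finset.sum_congr rfl
      intro i _
      rw [hv]; rw [smul_sub]
    rw [e1, Finset.sum_sub_distrib, ← Finset.sum_smul]
    have e2 : ∑ y ∈ B', δ y • emb d y = ∑ y ∈ B, δ y • emb d y - δ b₀ • emb d b₀ := by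
      rw [hB', Finset.sum_erase_eq_sub hb₀]
    have e3 : ∑ y ∈ B', δ y = ∑ y ∈ B, δ y - δ b₀ := by
      rw [hB', Finset.sum_erase_eq_sub hb₀]
    rw [e2, e3, h0, hm]
    simp
  have hall : ∀ i : ↥B', δ ↑i = 0 := by
    have := Fintype.linearIndependent_iff.mp hli (fun i => δ ↑i) hkey
    exact this
  intro y hy
  by_cases hyb : y = b₀
  · have : ∑ y ∈ B', δ y = 0 := by
      rw [← Finset.sum_attach B' (fun y => δ y)]
      exact Finset.sum_eq_zero fun i _ => hall i
    have e3 : ∑ y ∈ B', δ y = ∑ y ∈ B, δ y - δ b₀ := by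
      rw [hB', Finset.sum_erase_eq_sub hb₀]
    rw [e3, hm] at this
    rw [hyb]; linarith
  · exact hall ⟨y, Finset.mem_erase.mpr ⟨hyb, hy⟩⟩



theorem exP_subset {d : ℕ} (A : Finset (Fin d → ℤ)) : exP d A ⊆ ↑A := by
  classical
  rintro p ⟨hp, v, -, -, hstrict⟩
  by_contra hpA
  rw [mem_hull_iff] at hp
  obtain ⟨w, hw0, hw1, hrep⟩ := hp
  set F : (Fin d → ℝ) → ℝ := fun x => ∑ i, v i * x i with hF
  have hFy : ∀ y ∈ A, F (emb d p) < F (emb d y) := by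
    intro y hy
    apply hstrict
    · exact subset_convexHull ℝ _ ⟨y, by simpa using hy, rfl⟩
    · intro h
      exact hpA (by simpa [Finset.mem_coe] using (emb_inj d h) ▸ hy)
  have hexw : ∃ y ∈ A, 0 < w y := by
    by_contra h
    push_neg at h
    have : ∑ y ∈ A, w y = 0 :=
      le_antisymm (Finset.sum_nonpos h) (Finset.sum_nonneg hw0)
    rw [hw1] at this; norm_num at this
  have hlin : F (emb d p) = ∑ y ∈ A, w y * F (emb d y) := by
    rw [hF]
    simp only []
    rw [hrep]
    simp only [Finset.sum_apply, Pi.smul_apply, smul_eq_mul, Finset.mul_sum]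
    rw [Finset.sum_comm]
    apply Finset.sum_congr rfl
    intro y _
    apply Finset.sum_congr rfl
    intro i _
    ring
  have hlt : F (emb d p) < F (emb d p) := by
    calc F (emb d p) = ∑ y ∈ A, w y * F (emb d y) := hlin
    _ > ∑ y ∈ A, w y * F (emb d p) := by
        obtain ⟨y₀, hy₀, hwy₀⟩ := hexw
        apply Finset.sum_lt_sum
        · intro y hy
          exact mul_le_mul_of_nonneg_left (le_of_lt (hFy y hy)) (hw0 y hy)
        · exact ⟨y₀, hy₀, by
            exact mul_lt_mul_of_pos_left (hFy y₀ hy₀) hwy₀⟩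
    _ = (∑ y ∈ A, w y) * F (emb d p) := by rw [Finset.sum_mul]
    _ = F (emb d p) := by rw [hw1, one_mul]
  exact lt_irrefl _ hlt



theorem vertex_mem_exP {d : ℕ} (hd : 1 ≤ d) (A B : Finset (Fin d → ℤ)) (hBA : B ⊆ A)
    (hcardB : B.card = d + 1)
    (hspan : Submodule.span ℝ (emb d '' ((B : Set (Fin d → ℤ)) - (B : Set (Fin d → ℤ)))) = ⊤)
    (hhull : hull d B = hull d A) {z : Fin d → ℤ} (hz : z ∈ B) : z ∈ exP d A := by
  classical
  set B' := B.erase z with hB'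
  have hcard' : B'.card = d := by
    rw [hB', Finset.card_erase_of_mem hz, hcardB]; omega
  set v : ↥B' → (Fin d → ℝ) := fun y => emb d ↑y - emb d z with hv
  have hyspan : ∀ y ∈ B, emb d y - emb d z ∈ Submodule.span ℝ (Set.range v) := by
    intro y hy
    by_cases hyb : y = z
    · simp [hyb]
    · exact Submodule.subset_span ⟨⟨y, Finset.mem_erase.mpr ⟨hyb, hy⟩⟩, rfl⟩
  have htop : ⊤ ≤ Submodule.span ℝ (Set.range v) := by
    rw [← hspan, Submodule.span_le]
    rintro - ⟨s, ⟨y, hy, z', hz', rfl⟩, rfl⟩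
    have : emb d (y - z') = (emb d y - emb d z) - (emb d z' - emb d z) := by
      rw [emb_sub]; abel
    rw [this]
    exact Submodule.sub_mem _ (hyspan y hy) (hyspan z' hz')
  have hfin : Fintype.card ↥B' = Module.finrank ℝ (Fin d → ℝ) := by
    rw [Fintype.card_coe, hcard', Module.finrank_fintype_fun_eq_card, Fintype.card_fin]
  set bas := basisOfTopLeSpanOfCardEqFinrank v htop hfin with hbasdef
  have hbas : ⇑bas = v := coe_basisOfTopLeSpanOfCardEqFinrank v htop hfin
  set φ : (Fin d → ℝ) →ₗ[ℝ] ℝ := ∑ i : ↥B', bas.coord i with hφ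
  have hφv : ∀ i : ↥B', φ (v i) = 1 := by
    intro i
    rw [hφ]
    rw [LinearMap.sum_apply]
    have : ∀ j : ↥B', bas.coord j (v i) = if i = j then 1 else 0 := by
      intro j
      rw [← hbas]
      rw [Module.Basis.coord_apply, Module.Basis.repr_self]
      rw [Finsupp.single_apply]
    rw [Finset.sum_congr rfl (fun j _ => this j)]
    simp
  set vvec : Fin d → ℝ := fun i => φ (fun j => if i = j then 1 else 0) with hvvec
  have hvx : ∀ x : Fin d → ℝ, (∑ i, vvec i * x i) = φ x := by
    intro x
    rw [LinearMap.pi_apply_eq_sum_univ φ x]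
    apply Finset.sum_congr rfl
    intro i _
    rw [hvvec]; simp [mul_comm]
  -- key positivity on the hull
  have hkey : ∀ x ∈ hull d A, x ≠ emb d z → 0 < φ (x - emb d z) := by
    intro x hx hxz
    rw [← hhull, mem_hull_iff] at hx
    obtain ⟨w, hw0, hw1, rfl⟩ := hx
    have hrepr : (∑ y ∈ B, w y • emb d y) - emb d z = ∑ i : ↥B', w ↑i • v i := by
      have e1 : ∑ i : ↥B', w ↑i • v i = ∑ y ∈ B', (w y • emb d y - w y • emb d z) := by
        rw [← Finset.sum_attach B' (fun y => w y • emb d y - w y • emb d z)]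
        apply Finset.sum_congr rfl
        intro i _
        rw [hv, smul_sub]
      rw [e1, Finset.sum_sub_distrib, ← Finset.sum_smul]
      rw [hB', Finset.sum_erase_eq_sub hz, Finset.sum_erase_eq_sub hz, hw1]
      rw [sub_smul, one_smul]
      abel
    rw [hrepr, map_sum]
    have e2 : ∀ i : ↥B', φ (w ↑i • v i) = w ↑i := by
      intro i
      rw [_root_.map_smul, hφv]; simp
    rw [Finset.sum_congr rfl (fun i _ => e2 i)]
    -- show the sum of the non-z weights is positive
    rcases lt_or_ge 0 (∑ i : ↥B', w ↑i) with h | h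
    · exact h
    · exfalso
      have hnn : ∀ i : ↥B', 0 ≤ w ↑i := fun i => hw0 _ (Finset.mem_of_mem_erase i.2)
      have hzero : ∀ i : ↥B', w ↑i = 0 := by
        intro i
        have hsum0 : ∑ i : ↥B', w ↑i = 0 :=
          le_antisymm h (Finset.sum_nonneg fun i _ => hnn i)
        have := (Finset.sum_eq_zero_iff_of_nonneg (fun i _ => hnn i)).mp hsum0
        exact this i (Finset.mem_univ i)
      have hwz : w z = 1 := by
        have : ∑ y ∈ B', w y = 0 := by
          rw [← Finset.sum_attach B' (fun y => w y)]
          exact Finset.sum_eq_zero fun i _ => hzero i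
        have e3 : ∑ y ∈ B', w y = ∑ y ∈ B, w y - w z := by
          rw [hB', Finset.sum_erase_eq_sub hz]
        rw [e3, hw1] at this
        linarith
      apply hxz
      have : ∀ y ∈ B, w y • emb d y = (if y = z then emb d z else 0) := by
        intro y hy
        by_cases hyz : y = z
        · rw [hyz, hwz, one_smul, if_pos rfl]
        · rw [if_neg hyz]
          have : w y = 0 := hzero ⟨y, Finset.mem_erase.mpr ⟨hyz, hy⟩⟩
          rw [this, zero_smul]
      rw [Finset.sum_congr rfl this, Finset.sum_ite_eq' B z, if_pos hz]
  -- assemble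
  refine ⟨subset_convexHull ℝ _ ⟨z, by simpa using hBA hz, rfl⟩, vvec, ?_, ?_, ?_⟩
  · have hspanA : Submodule.span ℝ
        (emb d '' ((A : Set (Fin d → ℤ)) - (A : Set (Fin d → ℤ)))) = ⊤ := by
      rw [eq_top_iff, ← hspan]
      exact Submodule.span_mono (Set.image_mono
        (Set.sub_subset_sub (Finset.coe_subset.mpr hBA) (Finset.coe_subset.mpr hBA)))
    rw [hspanA]; exact Submodule.mem_top
  · -- vvec ≠ 0
    intro h0
    have hι : Nonempty ↥B' :=
      Finset.Nonempty.coe_sort (Finset.card_pos.mp (by omega))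
    obtain ⟨i₀⟩ := hι
    have h1 : φ (v i₀) = 1 := hφv i₀
    have h2 : φ (v i₀) = 0 := by
      rw [← hvx (v i₀), h0]
      simp
    rw [h1] at h2; norm_num at h2
  · intro x hx hxz
    have := hkey x hx hxz
    rw [map_sub] at this
    rw [hvx x, hvx (emb d z)] at *
    linarith


theorem vert_indep {d : ℕ} (B : Finset (Fin d → ℤ)) (hcardB : B.card = d + 1)
    (hspan : Submodule.span ℝ (emb d '' ((B : Set (Fin d → ℤ)) - (B : Set (Fin d → ℤ)))) = ⊤)
    {b₀ : Fin d → ℤ} (hb₀ : b₀ ∈ B) :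
    LinearIndependent ℝ (fun (y : ↥(B.erase b₀)) => emb d ↑y - emb d b₀) := by
  classical
  set B' := B.erase b₀ with hB'
  have hcard' : B'.card = d := by
    rw [hB', Finset.card_erase_of_mem hb₀, hcardB]; omega
  set v : ↥B' → (Fin d → ℝ) := fun y => emb d ↑y - emb d b₀ with hv
  have hyspan : ∀ y ∈ B, emb d y - emb d b₀ ∈ Submodule.span ℝ (Set.range v) := by
    intro y hy
    by_cases hyb : y = b₀
    · simp [hyb]
    · exact Submodule.subset_span ⟨⟨y, Finset.mem_erase.mpr ⟨hyb, hy⟩⟩, rfl⟩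
  have htop : ⊤ ≤ Submodule.span ℝ (Set.range v) := by
    rw [← hspan, Submodule.span_le]
    rintro - ⟨s, ⟨y, hy, z', hz', rfl⟩, rfl⟩
    have : emb d (y - z') = (emb d y - emb d b₀) - (emb d z' - emb d b₀) := by
      rw [emb_sub]; abel
    rw [this]
    exact Submodule.sub_mem _ (hyspan y hy) (hyspan z' hz')
  have hfin : Fintype.card ↥B' = Module.finrank ℝ (Fin d → ℝ) := by
    rw [Fintype.card_coe, hcard', Module.finrank_fintype_fun_eq_card, Fintype.card_fin]
  have h := (basisOfTopLeSpanOfCardEqFinrank v htop hfin).linearIndependent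
  rwa [coe_basisOfTopLeSpanOfCardEqFinrank] at h

theorem qp_exists {d : ℕ} (hd : 1 ≤ d) (B : Finset (Fin d → ℤ)) (hcardB : B.card = d + 1)
    (hspan : Submodule.span ℝ (emb d '' ((B : Set (Fin d → ℤ)) - (B : Set (Fin d → ℤ)))) = ⊤)
    (astar : Fin d → ℤ) (hastar : emb d astar ∈ hull d B) :
    ∃ (q : ℤ) (p : (Fin d → ℤ) → ℤ), 0 < q ∧ (∀ y ∈ B, 0 ≤ p y) ∧
      (∑ y ∈ B, p y) = q ∧ (q • astar = ∑ y ∈ B, p y • y) ∧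
      (∀ (t : ℤ) (r : (Fin d → ℤ) → ℤ), (t • astar = ∑ y ∈ B, r y • y) →
        (t = ∑ y ∈ B, r y) → ∃ t' : ℤ, t = t' * q ∧ ∀ y ∈ B, r y = t' * p y) := by
  classical
  have hBne : B.Nonempty := Finset.card_pos.mp (by omega)
  obtain ⟨b₀, hb₀⟩ := hBne
  set B' := B.erase b₀ with hB'
  have hcard' : B'.card = d := by
    rw [hB', Finset.card_erase_of_mem hb₀, hcardB]; omega
  have hindep := vert_indep B hcardB hspan hb₀
  -- the relation subgroup
  set T : AddSubgroup ℤ :=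
    { carrier := {t | ∃ r : (Fin d → ℤ) → ℤ,
        t • astar = ∑ y ∈ B, r y • y ∧ t = ∑ y ∈ B, r y}
      zero_mem' := ⟨0, by simp, by simp⟩
      add_mem' := by
        rintro a b ⟨r₁, h₁, h₁'⟩ ⟨r₂, h₂, h₂'⟩
        exact ⟨r₁ + r₂, by
          simp only [add_smul, h₁, h₂, Pi.add_apply, Finset.sum_add_distrib], by
          simp only [Pi.add_apply, Finset.sum_add_distrib]; omega⟩
      neg_mem' := by
        rintro a ⟨r₁, h₁, h₁'⟩
        exact ⟨-r₁, by
          simp only [neg_smul, h₁, Pi.neg_apply, Finset.sum_neg_distrib], by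
          simp only [Pi.neg_apply, Finset.sum_neg_distrib]; omega⟩ } with hT
  -- uniqueness of r given t
  have huniq : ∀ (t : ℤ) (r r' : (Fin d → ℤ) → ℤ),
      (t • astar = ∑ y ∈ B, r y • y) → (t = ∑ y ∈ B, r y) →
      (t • astar = ∑ y ∈ B, r' y • y) → (t = ∑ y ∈ B, r' y) →
      ∀ y ∈ B, r y = r' y := by
    intro t r r' h1 h1' h2 h2' y hy
    have key : ∀ y ∈ B, ((fun z => ((r z : ℝ) - (r' z : ℝ))) y) = 0 := by
      apply uniq_rep B hcardB hspan
      · have e1 : emb d (∑ y ∈ B, r y • y) = ∑ y ∈ B, (r y : ℝ) • emb d y := by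
          rw [emb_sum']
          exact Finset.sum_congr rfl fun y _ => emb_zsmul _ _
        have e2 : emb d (∑ y ∈ B, r' y • y) = ∑ y ∈ B, (r' y : ℝ) • emb d y := by
          rw [emb_sum']
          exact Finset.sum_congr rfl fun y _ => emb_zsmul _ _
        have : emb d (∑ y ∈ B, r y • y) = emb d (∑ y ∈ B, r' y • y) := by rw [← h1, ← h2]
        rw [e1, e2] at this
        simp only [sub_smul, Finset.sum_sub_distrib, this, sub_self]
      · have hc1 : (t : ℝ) = ∑ y ∈ B, (r y : ℝ) := by exact_mod_cast h1'
        have hc2 : (t : ℝ) = ∑ y ∈ B, (r' y : ℝ) := by exact_mod_cast h2'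
        simp only [Finset.sum_sub_distrib, ← hc1, ← hc2, sub_self]
    have hzero : (r y : ℝ) - (r' y : ℝ) = 0 := key y hy
    have : (r y : ℝ) = (r' y : ℝ) := by linarith
    exact_mod_cast this
  -- a nonzero element of T via the adjugate
  have hTne : ∃ t : ℤ, t ≠ 0 ∧ t ∈ T := by
    set e : ↥B' ≃ Fin d := Fintype.equivFinOfCardEq (by
      rw [Fintype.card_coe, hcard']) with he
    set M : Matrix (Fin d) (Fin d) ℤ :=
      Matrix.of (fun i j => (e.symm j : Fin d → ℤ) i - b₀ i) with hM
    have hdet : M.det ≠ 0 := by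
      intro h0
      have hdetR : (M.map (Int.cast : ℤ → ℝ)).det = 0 := by
        have h2 : (M.map (Int.cast : ℤ → ℝ)).det = (M.det : ℝ) :=
          Eq.symm (RingHom.map_det (Int.castRingHom ℝ) M)
        rw [h2, h0]; simp
      obtain ⟨c, hc0, hc⟩ := (Matrix.exists_mulVec_eq_zero_iff).mpr hdetR
      -- translate to a linear dependence
      have hdep : ∑ i : ↥B', c (e i) • (emb d ↑i - emb d b₀) = 0 := by
        have : ∀ i : Fin d, (M.map (Int.cast : ℤ → ℝ)).mulVec c i = 0 := fun i =>
          congrFun hc i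
        funext ii
        have h1 := this ii
        rw [Matrix.mulVec, dotProduct] at h1
        have hterm : ∑ i : ↥B', (c (e i) • (emb d ↑i - emb d b₀)) ii
            = ∑ j : Fin d, (M.map (Int.cast : ℤ → ℝ)) ii j * c j := by
          rw [← Equiv.sum_comp e (fun j => (M.map (Int.cast : ℤ → ℝ)) ii j * c j)]
          apply Finset.sum_congr rfl
          intro i _
          simp only [Pi.smul_apply, Pi.sub_apply, smul_eq_mul, Matrix.map_apply, hM,
            Matrix.of_apply, Equiv.symm_apply_apply, emb]
          push_cast
          ring
        simp only [Finset.sum_apply, Pi.zero_apply]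
        rw [hterm]
        exact h1
      have := Fintype.linearIndependent_iff.mp hindep (fun i => c (e i)) hdep
      apply hc0
      funext j
      have := this (e.symm j)
      simpa using this
    -- the adjugate relation
    set w : Fin d → ℤ := astar - b₀ with hw
    set r₀ : Fin d → ℤ := M.adjugate.mulVec w with hr₀
    have hMr : M.mulVec r₀ = M.det • w := by
      rw [hr₀, Matrix.mulVec_mulVec, Matrix.mul_adjugate, Matrix.smul_mulVec,
        Matrix.one_mulVec]
    have hvec : ∑ i : ↥B', r₀ (e i) • ((i : Fin d → ℤ) - b₀) = M.det • (astar - b₀) := by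
      funext ii
      have h1 := congrFun hMr ii
      rw [Matrix.mulVec, dotProduct] at h1
      rw [Finset.sum_apply]
      have : ∑ i : ↥B', (r₀ (e i) • ((i : Fin d → ℤ) - b₀)) ii
          = ∑ j : Fin d, M ii j * r₀ j := by
        rw [← Equiv.sum_comp e (fun j => M ii j * r₀ j)]
        apply Finset.sum_congr rfl
        intro i _
        simp only [Pi.smul_apply, Pi.sub_apply, smul_eq_mul, hM, Matrix.of_apply,
          Equiv.symm_apply_apply]
        ring
      rw [this, h1]
    refine ⟨M.det, hdet, ?_⟩
    set rr : (Fin d → ℤ) → ℤ := fun y =>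
      if h : y ∈ B' then (if y = b₀ then 0 else r₀ (e ⟨y, h⟩)) else
        (if y = b₀ then M.det - ∑ i : ↥B', r₀ (e i) else 0) with hrr
    have hb₀B' : b₀ ∉ B' := by simp [hB']
    have hrrb₀ : rr b₀ = M.det - ∑ i : ↥B', r₀ (e i) := by
      rw [hrr]; simp [hb₀B']
    have hrrB' : ∀ i : ↥B', rr ↑i = r₀ (e i) := by
      intro i
      have hne : (i : Fin d → ℤ) ≠ b₀ := (Finset.mem_erase.mp i.2).1
      rw [hrr]; simp [i.2, hne]
    have hsum : ∀ (f : (Fin d → ℤ) → (Fin d → ℤ)),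
        ∑ y ∈ B, (rr y • f y) = rr b₀ • f b₀ + ∑ i : ↥B', rr ↑i • f ↑i := by
      intro f
      rw [← Finset.add_sum_erase B _ hb₀, ← hB']
      congr 1
      exact (Finset.sum_coe_sort B' (fun y => rr y • f y)).symm
    refine ⟨rr, ?_, ?_⟩
    · rw [hsum (fun y => y), hrrb₀]
      have hs : ∑ i : ↥B', rr ↑i • (i : Fin d → ℤ)
          = ∑ i : ↥B', r₀ (e i) • ((i : Fin d → ℤ) - b₀) + (∑ i : ↥B', r₀ (e i)) • b₀ := by
        rw [Finset.sum_smul, ← Finset.sum_add_distrib]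
        apply Finset.sum_congr rfl
        intro i _
        rw [hrrB' i, smul_sub, sub_add_cancel]
      rw [hs, hvec]
      rw [smul_sub, sub_smul]
      abel
    · rw [← Finset.add_sum_erase B rr hb₀, ← hB', hrrb₀, ← Finset.sum_coe_sort B' rr]
      rw [Finset.sum_congr rfl (fun (i : ↥B') (_ : i ∈ Finset.univ) => hrrB' i)]
      ring
  -- cyclic structure
  obtain ⟨g, hgT⟩ := Int.subgroup_cyclic T
  have hmemT : ∀ x : ℤ, x ∈ T ↔ ∃ n : ℤ, n * g = x := by
    intro x
    rw [hgT, AddSubgroup.mem_closure_singleton]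
    simp [smul_eq_mul]
  have hgne : g ≠ 0 := by
    obtain ⟨t, ht0, htT⟩ := hTne
    intro hg0
    obtain ⟨n, hn⟩ := (hmemT t).mp htT
    rw [hg0, mul_zero] at hn
    exact ht0 hn.symm
  set q : ℤ := |g| with hqdef
  have hq : 0 < q := abs_pos.mpr hgne
  have hgT' : g ∈ T := by
    rw [hgT]; exact AddSubgroup.subset_closure rfl
  have hqT : q ∈ T := by
    rcases abs_choice g with h | h
    · rw [hqdef, h]; exact hgT'
    · rw [hqdef, h]; exact neg_mem hgT'
  obtain ⟨p, hp1, hp2⟩ := hqT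
  -- nonnegativity of p
  have hp0 : ∀ y ∈ B, 0 ≤ p y := by
    rw [mem_hull_iff] at hastar
    obtain ⟨θ, hθ0, hθ1, hθrep⟩ := hastar
    have key : ∀ y ∈ B, ((fun z => (p z : ℝ) - q * θ z) y) = 0 := by
      apply uniq_rep B hcardB hspan
      · have e1 : emb d (q • astar) = (q : ℝ) • emb d astar := emb_zsmul _ _
        have e2 : emb d (∑ y ∈ B, p y • y) = ∑ y ∈ B, (p y : ℝ) • emb d y := by
          rw [emb_sum']
          exact Finset.sum_congr rfl fun y _ => emb_zsmul _ _
        have e3 : emb d (q • astar) = emb d (∑ y ∈ B, p y • y) := congrArg _ hp1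
        rw [e1, e2, hθrep, Finset.smul_sum] at e3
        simp only [sub_smul, Finset.sum_sub_distrib]
        rw [← e3]
        apply sub_eq_zero_of_eq
        apply Finset.sum_congr rfl
        intro y _
        rw [smul_smul]
      · have hc1 : (q : ℝ) = ∑ y ∈ B, (p y : ℝ) := by exact_mod_cast hp2
        simp only [Finset.sum_sub_distrib, ← hc1, ← Finset.mul_sum, hθ1, mul_one, sub_self]
    intro y hy
    have hz : (p y : ℝ) - q * θ y = 0 := key y hy
    have : (0:ℝ) ≤ (p y : ℝ) := by
      have := mul_nonneg (le_of_lt (by exact_mod_cast hq : (0:ℝ) < (q:ℝ))) (hθ0 y hy)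
      linarith
    exact_mod_cast this
  refine ⟨q, p, hq, hp0, hp2.symm, hp1, ?_⟩
  intro t r h1 h1'
  have htT : t ∈ T := ⟨r, h1, h1'⟩
  obtain ⟨n, hn⟩ := (hmemT t).mp htT
  have hqg : q = g ∨ q = -g := by
    rcases abs_choice g with h | h
    · left; rw [hqdef, h]
    · right; rw [hqdef, h]
  have hdvd : ∃ t' : ℤ, t = t' * q := by
    rcases hqg with h | h
    · exact ⟨n, by rw [h, ← hn]⟩
    · exact ⟨-n, by rw [h]; rw [← hn]; ring⟩
  obtain ⟨t', ht'⟩ := hdvd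
  refine ⟨t', ht', ?_⟩
  have hrel2 : t • astar = ∑ y ∈ B, (t' * p y) • y := by
    rw [ht', mul_smul, hp1, Finset.smul_sum]
    exact Finset.sum_congr rfl fun y _ => smul_smul t' (p y) y
  have hmass2 : t = ∑ y ∈ B, t' * p y := by
    rw [← Finset.mul_sum, ← hp2, ht']
  exact huniq t r (fun y => t' * p y) h1 h1' hrel2 hmass2



theorem uniq_rep' {d : ℕ} (B : Finset (Fin d → ℤ)) (hcardB : B.card = d + 1)
    (hspan : Submodule.span ℝ (emb d '' ((B : Set (Fin d → ℤ)) - (B : Set (Fin d → ℤ)))) = ⊤)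
    (f g : (Fin d → ℤ) → ℝ) (h0 : ∑ y ∈ B, f y • emb d y = ∑ y ∈ B, g y • emb d y)
    (hm : ∑ y ∈ B, f y = ∑ y ∈ B, g y) :
    ∀ y ∈ B, f y = g y := by
  have key : ∀ y ∈ B, ((fun z => f z - g z) y) = 0 := by
    apply uniq_rep B hcardB hspan
    · simp only [sub_smul, Finset.sum_sub_distrib, h0, sub_self]
    · simp only [Finset.sum_sub_distrib, hm, sub_self]
  intro y hy
  have := key y hy
  simp only [sub_eq_zero] at this
  exact this

theorem lhs_subset {d : ℕ} (A : Finset (Fin d → ℤ)) (a0 : Fin d → ℤ) (ha0 : a0 ∈ A)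
    (N : ℕ) (hN : 1 ≤ N) :
    emb d '' nfold d ↑A N ⊆
      (((N : ℝ) • hull d A ∩
        emb d '' (({N • a0} : Set (Fin d → ℤ)) +
          (latt d ((A : Set (Fin d → ℤ)) - (A : Set (Fin d → ℤ))) : Set (Fin d → ℤ)))) \
      ⋃ a ∈ exP d A,
        emb d '' (({N • a} : Set (Fin d → ℤ)) - excep d (A.image fun y => a - y))) := by
  classical
  rintro ξ ⟨x, hx, rfl⟩
  obtain ⟨c, hcN, hcx⟩ := nfold_mem_combo A hx
  refine ⟨⟨?_, ?_⟩, ?_⟩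
  · rw [mem_smul_hull_iff A N hN]
    refine ⟨fun y => (c y : ℝ), fun y _ => by positivity, by beta_reduce; exact_mod_cast hcN, ?_⟩
    rw [hcx, emb_sum']
    apply Finset.sum_congr rfl
    intro y _
    rw [emb_zsmul]
    norm_num
  · refine ⟨x, ?_, rfl⟩
    rw [Set.mem_add]
    refine ⟨N • a0, Set.mem_singleton _, x - N • a0, ?_, by abel⟩
    have hrw : x - N • a0 = ∑ y ∈ A, (c y : ℤ) • (y - a0) := by
      rw [hcx]
      have : (N : ℤ) • a0 = ∑ y ∈ A, (c y : ℤ) • a0 := by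
        rw [← Finset.sum_smul]
        congr 1
        exact_mod_cast hcN.symm
      rw [show (N • a0 : Fin d → ℤ) = (N : ℤ) • a0 from (natCast_zsmul a0 N).symm, this,
        ← Finset.sum_sub_distrib]
      apply Finset.sum_congr rfl
      intro y _
      rw [smul_sub]
    rw [hrw]
    apply AddSubgroup.sum_mem
    intro y hy
    apply AddSubgroup.zsmul_mem
    apply AddSubgroup.subset_closure
    exact Set.sub_mem_sub (Finset.mem_coe.mpr hy) (Finset.mem_coe.mpr ha0)
  · intro hmem
    rw [Set.mem_iUnion₂] at hmem
    obtain ⟨a, haP, hmem2⟩ := hmem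
    obtain ⟨z, hz, hzx⟩ := hmem2
    rw [Set.mem_sub] at hz
    obtain ⟨s, hs, u, hu, hsu⟩ := hz
    rw [Set.mem_singleton_iff] at hs
    subst hs
    have hxz : x = z := emb_inj d hzx.symm
    have huval : u = N • a - x := by rw [hxz, ← hsu]; abel
    obtain ⟨f, hf, hxf⟩ := hx
    have hform : u = ∑ i : Fin N, (a - f i) := by
      rw [huval, hxf, Finset.sum_sub_distrib]
      congr 1
      rw [Finset.sum_const, Finset.card_univ, Fintype.card_fin]
    exact hu.2.2 (Set.mem_biUnion (Set.mem_Ici.mpr hN)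
      ⟨fun i => a - f i, fun i => Finset.mem_coe.mpr (Finset.mem_image_of_mem _ (hf i)),
        hform⟩)



/-- Extract a mass-`N` integer representation from coset membership. -/
theorem coset_rep {d : ℕ} (A : Finset (Fin d → ℤ)) (a0 : Fin d → ℤ) (ha0 : a0 ∈ A)
    (N : ℕ) {x : Fin d → ℤ}
    (hx : x ∈ (({N • a0} : Set (Fin d → ℤ)) +
      (latt d ((A : Set (Fin d → ℤ)) - (A : Set (Fin d → ℤ))) : Set (Fin d → ℤ)))) :
    ∃ c : (Fin d → ℤ) → ℤ, (∑ y ∈ A, c y) = N ∧ x = ∑ y ∈ A, c y • y := by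
  classical
  rw [Set.mem_add] at hx
  obtain ⟨s, hs, l, hl, hslx⟩ := hx
  rw [Set.mem_singleton_iff] at hs
  subst hs
  obtain ⟨c0, hc00, hc0l⟩ := latt_combo A hl
  refine ⟨fun y => c0 y + if y = a0 then (N : ℤ) else 0, ?_, ?_⟩
  · rw [Finset.sum_add_distrib, hc00, Finset.sum_ite_eq' A a0 (fun _ => (N:ℤ)), if_pos ha0]
    ring
  · rw [← hslx, hc0l]
    have hsplit : (∑ y ∈ A, (c0 y + if y = a0 then (N:ℤ) else 0) • y)
        = ∑ y ∈ A, c0 y • y + ∑ y ∈ A, (if y = a0 then (N:ℤ) else 0) • y := by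
      rw [← Finset.sum_add_distrib]
      exact Finset.sum_congr rfl fun y _ => add_smul _ _ _
    rw [hsplit]
    have : ∑ y ∈ A, (if y = a0 then (N:ℤ) else 0) • y = (N : ℤ) • a0 := by
      have hterm : ∀ y ∈ A, ((if y = a0 then (N:ℤ) else 0) • y)
          = (if y = a0 then (N:ℤ) • y else 0) := by
        intro y _; split <;> simp
      rw [Finset.sum_congr rfl hterm, Finset.sum_ite_eq' A a0 (fun y => (N:ℤ) • y), if_pos ha0]
    rw [this, natCast_zsmul]
    abel

/-- `d+1` case: hull ∩ coset is contained in `NA`. -/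
theorem rhs_case1 {d : ℕ} (A : Finset (Fin d → ℤ)) (hcardA : A.card = d + 1)
    (hspanA : Submodule.span ℝ (emb d '' ((A : Set (Fin d → ℤ)) - (A : Set (Fin d → ℤ)))) = ⊤)
    (a0 : Fin d → ℤ) (ha0 : a0 ∈ A) (N : ℕ) (hN : 1 ≤ N) {ξ : Fin d → ℝ}
    (h1 : ξ ∈ (N : ℝ) • hull d A)
    (h2 : ξ ∈ emb d '' (({N • a0} : Set (Fin d → ℤ)) +
      (latt d ((A : Set (Fin d → ℤ)) - (A : Set (Fin d → ℤ))) : Set (Fin d → ℤ)))) :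
    ξ ∈ emb d '' nfold d ↑A N := by
  classical
  obtain ⟨x, hx2, rfl⟩ := h2
  obtain ⟨c1, hc1N, hc1x⟩ := coset_rep A a0 ha0 N hx2
  rw [mem_smul_hull_iff A N hN] at h1
  obtain ⟨w, hw0, hwN, hwx⟩ := h1
  have hcast : emb d x = ∑ y ∈ A, (c1 y : ℝ) • emb d y := by
    rw [hc1x, emb_sum']
    exact Finset.sum_congr rfl fun y _ => emb_zsmul _ _
  have heq : ∀ y ∈ A, (c1 y : ℝ) = w y := by
    apply uniq_rep' A hcardA hspanA
    · rw [← hcast, ← hwx]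
    · rw [hwN]; exact_mod_cast hc1N
  have hc1nn : ∀ y ∈ A, 0 ≤ c1 y := by
    intro y hy
    have h1 := heq y hy
    have h2 := hw0 y hy
    rw [← h1] at h2
    exact_mod_cast h2
  set cn : (Fin d → ℤ) → ℕ := fun y => (c1 y).toNat with hcn
  have hcncast : ∀ y ∈ A, ((cn y : ℤ)) = c1 y := fun y hy => Int.toNat_of_nonneg (hc1nn y hy)
  have hcnN : (∑ y ∈ A, cn y) = N := by
    have : ((∑ y ∈ A, cn y : ℕ) : ℤ) = ((N : ℕ) : ℤ) := by
      push_cast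
      rw [Finset.sum_congr rfl hcncast, hc1N]
    exact_mod_cast this
  refine ⟨x, ?_, rfl⟩
  have : x = ∑ y ∈ A, ((cn y : ℤ)) • y := by
    rw [hc1x]
    exact Finset.sum_congr rfl fun y hy => by rw [hcncast y hy]
  rw [this]
  exact combo_mem_nfold A N cn hcnN



theorem emb_add {d : ℕ} (u v : Fin d → ℤ) : emb d (u + v) = emb d u + emb d v := by
  funext i; simp [emb]

theorem sum_smul_sub {d : ℕ} (S : Finset (Fin d → ℤ)) (g : (Fin d → ℤ) → ℤ) (k : Fin d → ℤ) :
    ∑ y ∈ S, g y • (k - y) = (∑ y ∈ S, g y) • k - ∑ y ∈ S, g y • y := by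
  rw [Finset.sum_smul, ← Finset.sum_sub_distrib]
  exact Finset.sum_congr rfl fun y _ => smul_sub _ _ _

theorem rhs_case2 {d : ℕ} (hd : 1 ≤ d) (A B : Finset (Fin d → ℤ)) (hBA : B ⊆ A)
    (hcardB : B.card = d + 1)
    (hspan : Submodule.span ℝ (emb d '' ((B : Set (Fin d → ℤ)) - (B : Set (Fin d → ℤ)))) = ⊤)
    (hhull : hull d B = hull d A) (hcardA : A.card = d + 2)
    (a0 : Fin d → ℤ) (ha0 : a0 ∈ A) (N : ℕ) (hN : 1 ≤ N) {ξ : Fin d → ℝ}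
    (h1 : ξ ∈ (N : ℝ) • hull d A)
    (h2 : ξ ∈ emb d '' (({N • a0} : Set (Fin d → ℤ)) +
      (latt d ((A : Set (Fin d → ℤ)) - (A : Set (Fin d → ℤ))) : Set (Fin d → ℤ))))
    (h3 : ξ ∉ ⋃ a ∈ exP d A,
      emb d '' (({N • a} : Set (Fin d → ℤ)) - excep d (A.image fun y => a - y))) :
    ξ ∈ emb d '' nfold d ↑A N := by
  classical
  obtain ⟨x, hx2, rfl⟩ := h2
  obtain ⟨c1, hc1N, hc1x⟩ := coset_rep A a0 ha0 N hx2
  -- the extra point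
  have hBssA : B ⊂ A :=
    lt_of_le_of_ne hBA (fun h => by rw [h] at hcardB; omega)
  obtain ⟨astar, hastarA, hastarB⟩ := Finset.exists_of_ssubset hBssA
  have hA : A = insert astar B := by
    refine (Finset.eq_of_subset_of_card_le (Finset.insert_subset hastarA hBA) ?_).symm
    rw [Finset.card_insert_of_notMem hastarB, hcardB, hcardA]
  have hastarhull : emb d astar ∈ hull d B := by
    rw [hhull]; exact subset_convexHull ℝ _ ⟨astar, by simpa using hastarA, rfl⟩
  obtain ⟨q, p, hq, hp0, hpq, hrel, hclass⟩ := qp_exists hd B hcardB hspan astar hastarhull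
  -- canonical representation
  set m₀ : ℤ := c1 astar with hm₀def
  set t₀ : ℤ := m₀ / q with ht₀def
  set m : ℤ := m₀ % q with hmdef
  have hm0 : 0 ≤ m := Int.emod_nonneg m₀ (ne_of_gt hq)
  have hmq : m < q := Int.emod_lt_of_pos m₀ hq
  have hm₀ : m₀ = m + t₀ * q := by
    have h := Int.emod_add_mul_ediv m₀ q
    rw [hmdef, ht₀def]
    linear_combination -h
  set c : (Fin d → ℤ) → ℤ := fun y => c1 y + t₀ * p y with hcdef
  have hc1split : m₀ + ∑ y ∈ B, c1 y = N := by
    rw [hA, Finset.sum_insert hastarB] at hc1N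
    exact hc1N
  have hxrep : x = m • astar + ∑ y ∈ B, c y • y := by
    rw [hc1x, hA, Finset.sum_insert hastarB]
    have h5 : ∑ y ∈ B, c y • y = ∑ y ∈ B, c1 y • y + t₀ • ∑ y ∈ B, p y • y := by
      rw [Finset.smul_sum, ← Finset.sum_add_distrib]
      apply Finset.sum_congr rfl
      intro y _
      rw [hcdef]
      rw [add_smul, smul_smul]
    rw [h5, ← hrel, smul_smul]
    rw [show m₀ • astar = (m + t₀ * q) • astar from by rw [← hm₀]]
    rw [add_smul]
    abel
  have hmassB : m + ∑ y ∈ B, c y = N := by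
    have h5 : ∑ y ∈ B, c y = ∑ y ∈ B, c1 y + t₀ * q := by
      simp only [hcdef]
      rw [Finset.sum_add_distrib, ← Finset.mul_sum, hpq]
    rw [h5]
    linarith
  -- real weights from hull membership
  rw [← hhull, mem_smul_hull_iff B N hN] at h1
  obtain ⟨w, hw0, hwN, hwx⟩ := h1
  -- case split on nonnegativity of c
  by_cases hcase : ∀ y ∈ B, 0 ≤ c y
  · -- build the ℕ-combination
    refine ⟨x, ?_, rfl⟩
    set cn : (Fin d → ℤ) → ℕ := fun y => if y = astar then m.toNat else (c y).toNat with hcndef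
    have hcnB : ∀ y ∈ B, ((cn y : ℤ)) = c y := by
      intro y hy
      have hne : y ≠ astar := fun h => hastarB (h ▸ hy)
      simp only [hcndef, if_neg hne]
      exact Int.toNat_of_nonneg (hcase y hy)
    have hcnsum : ∑ y ∈ A, cn y = N := by
      have hZ : ((∑ y ∈ A, cn y : ℕ) : ℤ) = ((N : ℕ) : ℤ) := by
        push_cast
        rw [hA, Finset.sum_insert hastarB]
        simp only [hcndef, if_pos rfl]
        rw [Int.toNat_of_nonneg hm0]
        have : ∀ y ∈ B, ((if y = astar then m.toNat else (c y).toNat : ℕ) : ℤ) = c y := by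
          intro y hy
          exact hcnB y hy
        rw [Finset.sum_congr rfl this]
        push_cast at hmassB ⊢
        linarith
      exact_mod_cast hZ
    have hxcn : x = ∑ y ∈ A, ((cn y : ℤ)) • y := by
      rw [hA, Finset.sum_insert hastarB, hxrep]
      congr 1
      · simp only [hcndef, if_pos rfl]
        rw [Int.toNat_of_nonneg hm0]
      · exact Finset.sum_congr rfl fun y hy => by rw [hcnB y hy]
    rw [hxcn]
    exact combo_mem_nfold A N cn hcnsum
  · push_neg at hcase
    obtain ⟨y₀, hy₀B, hy₀neg⟩ := hcase
    have hBe : (B.erase y₀).Nonempty := by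
      rw [← Finset.card_pos, Finset.card_erase_of_mem hy₀B, hcardB]; omega
    obtain ⟨k, hk⟩ := hBe
    have hkB : k ∈ B := Finset.mem_of_mem_erase hk
    have hky₀ : k ≠ y₀ := Finset.ne_of_mem_erase hk
    have hinj : ∀ a ∈ A, ∀ b ∈ A, k - a = k - b → a = b :=
      fun a _ b _ h => sub_right_injective h
    exfalso
    apply h3
    apply Set.mem_biUnion (vertex_mem_exP hd A B hBA hcardB hspan hhull hkB)
    refine ⟨x, ?_, rfl⟩
    rw [Set.mem_sub]
    refine ⟨N • k, Set.mem_singleton _, N • k - x, ⟨?_, ?_, ?_⟩, by abel⟩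
    · -- cone membership
      refine ⟨fun z => if k - z ∈ B then w (k - z) else 0, ?_, ?_⟩
      · intro a
        by_cases h : k - a ∈ B
        · simp only [if_pos h]; exact hw0 _ h
        · simp only [if_neg h]; exact le_refl 0
      · rw [Finset.sum_image hinj]
        have hterm : ∀ y ∈ A, ((if k - (k - y) ∈ B then w (k - (k - y)) else 0) • emb d (k - y))
            = (if y ∈ B then w y • emb d (k - y) else 0) := by
          intro y _
          rw [sub_sub_cancel]
          split <;> simp
        rw [Finset.sum_congr rfl hterm, hA, Finset.sum_insert hastarB, if_neg hastarB,
          zero_add]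
        have hterm2 : ∀ y ∈ B, (if y ∈ B then w y • emb d (k - y) else 0)
            = w y • emb d k - w y • emb d y := by
          intro y hy
          rw [if_pos hy, emb_sub, smul_sub]
        rw [Finset.sum_congr rfl hterm2, Finset.sum_sub_distrib, ← Finset.sum_smul, hwN,
          ← hwx, emb_sub]
        have : emb d (N • k) = (N : ℝ) • emb d k := emb_nsmul N k
        rw [this]
    · -- lattice membership
      have hform : N • k - x = ∑ y ∈ A, c1 y • (k - y) := by
        rw [hc1x, sum_smul_sub, hc1N, natCast_zsmul]
      rw [hform]
      exact AddSubgroup.sum_mem _ fun y hy => AddSubgroup.zsmul_mem _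
        (AddSubgroup.subset_closure
          (Finset.mem_coe.mpr (Finset.mem_image_of_mem _ hy))) _
    · -- not in P
      intro hPA
      obtain ⟨M, hM1, hMn⟩ := Set.mem_iUnion₂.mp hPA
      obtain ⟨cc, hccM, hccrep⟩ := nfold_mem_combo (A.image (fun y => k - y)) hMn
      set u' : (Fin d → ℤ) → ℤ := fun y => (cc (k - y) : ℤ) with hu'def
      have h6 : ∑ y ∈ A, u' y = (M : ℤ) := by
        rw [← hccM, Finset.sum_image hinj]
        push_cast
        rfl
      have hccrep' : N • k - x = (M : ℤ) • k - ∑ y ∈ A, u' y • y := by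
        rw [hccrep, Finset.sum_image hinj]
        rw [show ∑ y ∈ A, (cc (k - y) : ℤ) • (k - y) = ∑ y ∈ A, u' y • (k - y) from rfl]
        rw [sum_smul_sub, h6]
      have hxu : x = ((N : ℤ) - M) • k + ∑ y ∈ A, u' y • y := by
        have hNk : (N • k : Fin d → ℤ) = (N : ℤ) • k := (natCast_zsmul k N).symm
        rw [hNk] at hccrep'
        rw [sub_smul]
        have : x = (N : ℤ) • k - ((M : ℤ) • k - ∑ y ∈ A, u' y • y) := by
          rw [← hccrep']; abel
        rw [this]; abel
      set m₂ : ℤ := u' astar with hm₂def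
      set c₂ : (Fin d → ℤ) → ℤ := fun y => u' y + (if y = k then (N : ℤ) - M else 0)
        with hc₂def
      have hitesum : ∑ y ∈ B, (if y = k then (N : ℤ) - M else 0) • y = ((N : ℤ) - M) • k := by
        have hterm : ∀ y ∈ B, ((if y = k then (N : ℤ) - M else 0) • y)
            = (if y = k then ((N : ℤ) - M) • y else 0) := by
          intro y _; split <;> simp
        rw [Finset.sum_congr rfl hterm,
          Finset.sum_ite_eq' B k (fun y => ((N : ℤ) - M) • y), if_pos hkB]
      have hxrep₂ : x = m₂ • astar + ∑ y ∈ B, c₂ y • y := by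
        have h7 : ∑ y ∈ B, c₂ y • y = ∑ y ∈ B, u' y • y + ((N : ℤ) - M) • k := by
          simp only [hc₂def]
          rw [← hitesum, ← Finset.sum_add_distrib]
          exact Finset.sum_congr rfl fun y _ => add_smul _ _ _
        rw [hxu, hA, Finset.sum_insert hastarB, h7]
        abel
      have hmass₂ : m₂ + ∑ y ∈ B, c₂ y = N := by
        have h8 : u' astar + ∑ y ∈ B, u' y = (M : ℤ) := by
          rw [hA, Finset.sum_insert hastarB] at h6
          exact h6
        have h9 : ∑ y ∈ B, c₂ y = ∑ y ∈ B, u' y + ((N : ℤ) - M) := by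
          simp only [hc₂def]
          rw [Finset.sum_add_distrib]
          congr 1
          rw [Finset.sum_ite_eq' B k (fun _ => (N : ℤ) - M), if_pos hkB]
        rw [hm₂def, h9]
        omega
      -- compare the two representations
      have hrelc : (m₂ - m) • astar = ∑ y ∈ B, (c y - c₂ y) • y := by
        have key : m • astar + ∑ y ∈ B, c y • y = m₂ • astar + ∑ y ∈ B, c₂ y • y :=
          hxrep.symm.trans hxrep₂
        have h10 : ∑ y ∈ B, (c y - c₂ y) • y = ∑ y ∈ B, c y • y - ∑ y ∈ B, c₂ y • y := by
          rw [← Finset.sum_sub_distrib]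
          exact Finset.sum_congr rfl fun y _ => sub_smul _ _ _
        rw [h10, sub_smul, sub_eq_sub_iff_add_eq_add, ← key]
        abel
      have hmassc : m₂ - m = ∑ y ∈ B, (c y - c₂ y) := by
        rw [Finset.sum_sub_distrib]
        omega
      obtain ⟨t', ht'q, ht'p⟩ := hclass (m₂ - m) (fun y => c y - c₂ y) hrelc hmassc
      have hm₂0 : 0 ≤ m₂ := Int.natCast_nonneg _
      have ht'0 : 0 ≤ t' := by
        by_contra hneg
        push_neg at hneg
        have ht1 : t' ≤ -1 := by omega
        have : t' * q ≤ -1 * q := mul_le_mul_of_nonneg_right ht1 (le_of_lt hq)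
        linarith
      have h11 : c y₀ - c₂ y₀ = t' * p y₀ := ht'p y₀ hy₀B
      have h12 : 0 ≤ t' * p y₀ := mul_nonneg ht'0 (hp0 y₀ hy₀B)
      have h13 : 0 ≤ u' y₀ := Int.natCast_nonneg _
      have h14 : c₂ y₀ = u' y₀ := by
        simp only [hc₂def, if_neg (Ne.symm hky₀)]
        ring
      linarith



end Aux

/-- Effective structure theorem, simplex case with `|A| = d+1` or `|A| = d+2`:
the structure equation holds for all `N ≥ 1`. -/
theorem structure_simplex_small (d : ℕ) (hd : 1 ≤ d)
    (A : Finset (Fin d → ℤ)) (hsimp : IsSimplex d A)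
    (hcard : A.card = d + 1 ∨ A.card = d + 2)
    (a0 : Fin d → ℤ) (ha0 : a0 ∈ A) :
    ∀ N : ℕ, 1 ≤ N → structEq d A a0 N := by
  obtain ⟨B, hBA, hcardB, hspan, hhull⟩ := hsimp
  intro N hN
  unfold structEq
  apply Set.Subset.antisymm
  · exact Aux.lhs_subset A a0 ha0 N hN
  · rintro ξ ⟨⟨h1, h2⟩, h3⟩
    rcases hcard with hc | hc
    · have hAB : B = A := Finset.eq_of_subset_of_card_le hBA (by rw [hcardB, hc])
      rw [hAB] at hspan
      exact Aux.rhs_case1 A hc hspan a0 ha0 N hN h1 h2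
    · exact Aux.rhs_case2 hd A B hBA hcardB hspan hhull hc a0 ha0 N hN h1 h2 h3
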